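/- Let μ₁ be a symmetric probability measure on ℝ, t > 0, and ε > 0. Then the equation w = ε + t·w·∫ 1/(u² + w²) dμ₁(u) has a unique solution w in (0, ∞). -/

import Mathlib

open MeasureTheory Filter Topology

section Aux

variable (μ₁ : Measure ℝ) [IsProbabilityMeasure μ₁]

lemma fp_cont (w : ℝ) (hw : (0:ℝ) < w) :
    Continuous (fun u : ℝ => 1 / (u ^ 2 + w ^ 2)) := by
  apply Continuous.div continuous_const (by continuity)
  intro u; positivity

lemma fp_integrable {w : ℝ} (hw : 0 < w) :
    Integrable (fun u : ℝ => 1 / (u ^ 2 + w ^ 2)) μ₁ := by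
  refine (integrable_const (1 / w ^ 2)).mono'
    ((fp_cont w hw).aestronglyMeasurable) ?_
  filter_upwards with u
  rw [Real.norm_eq_abs, abs_of_nonneg (by positivity)]
  exact one_div_le_one_div_of_le (by positivity) (by nlinarith)

lemma fp_nonneg (w : ℝ) : 0 ≤ ∫ u, 1 / (u ^ 2 + w ^ 2) ∂μ₁ := by
  apply integral_nonneg
  intro u
  positivity

lemma fp_le {w : ℝ} (hw : 0 < w) :
    (∫ u, 1 / (u ^ 2 + w ^ 2) ∂μ₁) ≤ 1 / w ^ 2 := by
  have := integral_mono (μ := μ₁) (fp_integrable μ₁ hw) (integrable_const (1 / w ^ 2))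
    (fun u => one_div_le_one_div_of_le (by positivity) (by nlinarith))
  simpa using this

lemma fp_anti {a b : ℝ} (ha : 0 < a) (hab : a ≤ b) :
    (∫ u, 1 / (u ^ 2 + b ^ 2) ∂μ₁) ≤ ∫ u, 1 / (u ^ 2 + a ^ 2) ∂μ₁ := by
  exact integral_mono (fp_integrable μ₁ (lt_of_lt_of_le ha hab)) (fp_integrable μ₁ ha)
    (fun u => one_div_le_one_div_of_le (by positivity) (by nlinarith))

lemma fp_contAt {w₀ : ℝ} (hw : 0 < w₀) :
    ContinuousAt (fun w : ℝ => ∫ u, 1 / (u ^ 2 + w ^ 2) ∂μ₁) w₀ := by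
  refine continuousAt_of_dominated (bound := fun _ => 1 / (w₀ / 2) ^ 2) ?_ ?_ ?_ ?_
  · filter_upwards [eventually_gt_nhds (show w₀ / 2 < w₀ by linarith)] with w hw2
    exact (fp_cont w (by linarith)).aestronglyMeasurable
  · filter_upwards [eventually_gt_nhds (show w₀ / 2 < w₀ by linarith)] with w hw2
    filter_upwards with u
    rw [Real.norm_eq_abs, abs_of_nonneg (by positivity)]
    exact one_div_le_one_div_of_le (by positivity) (by nlinarith)
  · exact integrable_const _
  · filter_upwards with u
    have hne : (u ^ 2 + w₀ ^ 2) ≠ 0 := by positivity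
    exact (continuousAt_const.div (by fun_prop) hne)

end Aux

/-- Let `μ₁` be a symmetric probability measure on `ℝ`, `t > 0` and `ε > 0`.  Then the
equation `w = ε + t·w·∫ 1/(u² + w²) dμ₁(u)` has a unique solution `w` in `(0, ∞)`. -/
theorem fixed_point_equation_unique_solution
    (μ₁ : Measure ℝ) [IsProbabilityMeasure μ₁]
    (hsym : Measure.map (fun u => -u) μ₁ = μ₁)
    (t ε : ℝ) (ht : 0 < t) (hε : 0 < ε) :
    ∃! w : ℝ, 0 < w ∧ w = ε + t * w * ∫ u, 1 / (u ^ 2 + w ^ 2) ∂μ₁ := by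
  set I : ℝ → ℝ := fun w => ∫ u, 1 / (u ^ 2 + w ^ 2) ∂μ₁ with hIdef
  set W : ℝ := ε + t / ε with hWdef
  have hεW : ε ≤ W := by
    have h0 : 0 < t / ε := by positivity
    simp only [hWdef]
    linarith
  have hWpos : 0 < W := lt_of_lt_of_le hε hεW
  set h : ℝ → ℝ := fun w => w - (ε + t * w * I w) with hhdef
  have hcont : ContinuousOn h (Set.Icc ε W) := by
    apply continuousOn_of_forall_continuousAt
    intro w hw
    have hwpos : 0 < w := lt_of_lt_of_le hε hw.1
    have : ContinuousAt I w := fp_contAt μ₁ hwpos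
    fun_prop
  have hhε : h ε ≤ 0 := by
    have h1 : 0 ≤ I ε := fp_nonneg μ₁ ε
    have : 0 ≤ t * ε * I ε := by positivity
    simp only [hhdef]
    linarith
  have hhW : 0 ≤ h W := by
    have h1 : I W ≤ 1 / W ^ 2 := fp_le μ₁ hWpos
    have h2 : t * W * I W ≤ t * W * (1 / W ^ 2) := by
      apply mul_le_mul_of_nonneg_left h1 (by positivity)
    have h3 : t * W * (1 / W ^ 2) = t / W := by
      field_simp
    have h4 : t / W ≤ t / ε := by
      apply div_le_div_of_nonneg_left (le_of_lt ht) hε hεW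
    simp only [hhdef, hWdef]
    calc (0:ℝ) = (ε + t / ε) - (ε + t / ε) := by ring
    _ ≤ (ε + t / ε) - (ε + t * W * I W) := by
        simp only [hWdef] at h2 h3 h4 ⊢
        linarith
  -- intermediate value theorem
  obtain ⟨w, hwmem, hww⟩ := intermediate_value_Icc hεW hcont ⟨hhε, hhW⟩
  have hwpos : 0 < w := lt_of_lt_of_le hε hwmem.1
  have hweq : w = ε + t * w * I w := by
    simp only [hhdef] at hww
    linarith
  refine ⟨w, ⟨hwpos, hweq⟩, ?_⟩
  rintro y ⟨hypos, hyeq⟩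
  -- uniqueness
  rcases le_total y w with hle | hle
  · have hIm : I w ≤ I y := fp_anti μ₁ hypos hle
    have := mul_le_mul_of_nonneg_left hIm (show (0:ℝ) ≤ t * w * y by positivity)
    nlinarith
  · have hIm : I y ≤ I w := fp_anti μ₁ hwpos hle
    have := mul_le_mul_of_nonneg_left hIm (show (0:ℝ) ≤ t * w * y by positivity)
    nlinarith
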